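/- Let V : B_R × [t₀ - θR², t₀] → ℝ≥0 be measurable, k > 0, δ₁ > 0, and suppose meas({x ∈ B_R : V(x,t) ≥ k·2^{-(m+1)}}) ≥ δ₁·meas(B_R) for every t in the time interval and every m ≥ 0 (implied by meas({V(·,t) ≥ k₀}∩B_R) ≥ δ₁ meas(B_R) with k₀ = k). Suppose moreover there is a constant C₁₄ such that for each m ≥ 0, ∫∫ over the space-time cylinder of |DV|² restricted to {V < k·2^{-m}} is at most C₁₄·(k·2^{-m})²·Rⁿ, and the De Giorgi isoperimetric inequality (k_m - k_{m+1})·meas({V(·,t) < k_{m+1}} ∩ B_R) ≤ C(n)·R/δ₁ · ∫_{{k_{m+1} ≤ V(·,t) < k_m}} |DV(·,t)| dx holds for each t. Then for every μ ∈ (0,1) there exists an integer s ≥ 1, depending only on n, C₁₄, δ₁, θ, μ, such that meas({V < 2^{-s} k} ∩ (B_R × [t₀-θR², t₀])) ≤ μ · meas(B_R × [t₀-θR², t₀]). -/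

import Mathlib

open MeasureTheory Metric Set

/-- Measure-decay argument of Lemma 3.3 (De Giorgi iteration in measure). -/
theorem stmt_11 (n : ℕ) (hn : 1 ≤ n)
    (V g : EuclideanSpace ℝ (Fin n) × ℝ → ℝ)
    (hV : Measurable V) (hg : Measurable g) (hgnn : ∀ p, 0 ≤ g p)
    (hVnn : ∀ p, 0 ≤ V p)
    (R θ t₀ k δ₁ C₁₄ Cn : ℝ) (hR : 0 < R) (hθ : 0 < θ) (hk : 0 < k)
    (hδ₁ : 0 < δ₁) (hC₁₄ : 0 < C₁₄) (hCn : 0 < Cn)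
    -- superlevel sets keep a fixed measure fraction at every time and level
    (hlevel : ∀ t ∈ Icc (t₀ - θ * R ^ 2) t₀, ∀ m : ℕ,
      ENNReal.ofReal δ₁ * volume (ball (0 : EuclideanSpace ℝ (Fin n)) R) ≤
        volume {x ∈ ball (0 : EuclideanSpace ℝ (Fin n)) R |
          k * (1 / 2) ^ (m + 1) ≤ V (x, t)})
    -- Caccioppoli-type energy bound on each truncation level
    (henergy : ∀ m : ℕ,
      (∫⁻ p in (ball (0 : EuclideanSpace ℝ (Fin n)) R ×ˢ Icc (t₀ - θ * R ^ 2) t₀) ∩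
          {p | V p < k * (1 / 2) ^ m}, ENNReal.ofReal ((g p) ^ 2)) ≤
        ENNReal.ofReal (C₁₄ * (k * (1 / 2) ^ m) ^ 2 * R ^ (n : ℝ)))
    -- De Giorgi isoperimetric inequality at each time slice and level
    (hDG : ∀ t ∈ Icc (t₀ - θ * R ^ 2) t₀, ∀ m : ℕ,
      (k * (1 / 2) ^ m - k * (1 / 2) ^ (m + 1)) *
          (volume {x ∈ ball (0 : EuclideanSpace ℝ (Fin n)) R |
            V (x, t) < k * (1 / 2) ^ (m + 1)}).toReal ≤
        Cn * R / δ₁ *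
          ∫ x in {x ∈ ball (0 : EuclideanSpace ℝ (Fin n)) R |
            k * (1 / 2) ^ (m + 1) ≤ V (x, t) ∧ V (x, t) < k * (1 / 2) ^ m}, g (x, t)) :
    ∀ μ : ℝ, 0 < μ → μ < 1 → ∃ s : ℕ, 1 ≤ s ∧
      volume ((ball (0 : EuclideanSpace ℝ (Fin n)) R ×ˢ Icc (t₀ - θ * R ^ 2) t₀) ∩
          {p | V p < (1 / 2) ^ s * k}) ≤
        ENNReal.ofReal μ *
          volume (ball (0 : EuclideanSpace ℝ (Fin n)) R ×ˢ Icc (t₀ - θ * R ^ 2) t₀) := by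
  intro μ hμ0 hμ1
  set B := ball (0 : EuclideanSpace ℝ (Fin n)) R with hB
  set I := Icc (t₀ - θ * R ^ 2) t₀ with hI
  set Q := B ×ˢ I with hQdef
  -- level values
  set km : ℕ → ℝ := fun m => k * (1 / 2) ^ m with hkmdef
  have hkm : ∀ m, 0 < km m := fun m => by positivity
  have hkm_succ : ∀ m, km m = 2 * km (m + 1) := by
    intro m; simp only [hkmdef, pow_succ]; ring
  -- sets
  set S : ℕ → Set (EuclideanSpace ℝ (Fin n) × ℝ) :=
    fun m => Q ∩ {p | V p < km m} with hSdef
  set Em : ℕ → Set (EuclideanSpace ℝ (Fin n) × ℝ) :=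
    fun m => Q ∩ {p | km (m + 1) ≤ V p ∧ V p < km m} with hEdef
  have mB : MeasurableSet B := measurableSet_ball
  have mI : MeasurableSet I := measurableSet_Icc
  have mQ : MeasurableSet Q := mB.prod mI
  have mS : ∀ m, MeasurableSet (S m) := fun m =>
    mQ.inter (hV measurableSet_Iio)
  have mE : ∀ m, MeasurableSet (Em m) := fun m =>
    mQ.inter ((hV measurableSet_Ici).inter (hV measurableSet_Iio))
  -- volume of Q
  have hQeq : volume Q = volume B * volume I := by
    rw [hQdef, Measure.volume_eq_prod, Measure.prod_prod]
  have hIvol : volume I = ENNReal.ofReal (θ * R ^ 2) := by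
    rw [hI, Real.volume_Icc]; congr 1; ring
  have hQfin : volume Q ≠ ⊤ := by
    rw [hQeq, hIvol]
    exact ENNReal.mul_ne_top measure_ball_lt_top.ne ENNReal.ofReal_ne_top
  have hQpos : 0 < volume Q := by
    rw [hQeq, hIvol]
    exact ENNReal.mul_pos (measure_ball_pos volume _ hR).ne'
      (by simp [ENNReal.ofReal_pos]; positivity)
  -- slice descriptions
  have sliceS : ∀ m, ∀ t ∈ I, (fun x => (x, t)) ⁻¹' (S m) = {x ∈ B | V (x, t) < km m} := by
    intro m t ht; ext x
    simp [hSdef, hQdef, Set.mem_prod, ht]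
  have sliceS_empty : ∀ m, ∀ t ∉ I, (fun x => (x, t)) ⁻¹' (S m) = ∅ := by
    intro m t ht; ext x
    simp [hSdef, hQdef, Set.mem_prod, ht]
  have sliceE : ∀ m, ∀ t ∈ I, (fun x => (x, t)) ⁻¹' (Em m) =
      {x ∈ B | km (m + 1) ≤ V (x, t) ∧ V (x, t) < km m} := by
    intro m t ht; ext x
    simp [hEdef, hQdef, Set.mem_prod, ht]; tauto
  -- slicing of volumes
  have volS : ∀ m, volume (S m) = ∫⁻ t, volume ((fun x => (x, t)) ⁻¹' (S m)) := by
    intro m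
    rw [Measure.volume_eq_prod, Measure.prod_apply_symm (mS m)]
  -- Fubini for the lintegral of g over Em
  have volL : ∀ m, (∫⁻ p in Em m, ENNReal.ofReal (g p)) =
      ∫⁻ t, ∫⁻ x in ((fun x => (x, t)) ⁻¹' (Em m)), ENNReal.ofReal (g (x, t)) := by
    intro m
    rw [← lintegral_indicator (mE m) _, Measure.volume_eq_prod,
      lintegral_prod_symm' _ ((hg.ennreal_ofReal).indicator (mE m))]
    congr 1; ext t
    rw [← lintegral_indicator (measurable_prodMk_right (mE m)) _]
    congr 1
  -- slicewise De Giorgi inequality, integrated in time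
  have key1 : ∀ m, ENNReal.ofReal (km (m+1)) * volume (S (m+1)) ≤
      ENNReal.ofReal (Cn * R / δ₁) * ∫⁻ p in Em m, ENNReal.ofReal (g p) := by
    intro m
    rw [volS (m+1), volL m, ← lintegral_const_mul' _ _ ENNReal.ofReal_ne_top,
      ← lintegral_const_mul' _ _ ENNReal.ofReal_ne_top]
    refine lintegral_mono fun t => ?_
    by_cases ht : t ∈ I
    · rw [sliceS (m+1) t ht, sliceE m t ht]
      set J := ∫⁻ x in {x | x ∈ B ∧ km (m + 1) ≤ V (x, t) ∧ V (x, t) < km m},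
        ENNReal.ofReal (g (x, t)) with hJ
      rcases eq_or_ne J ⊤ with hJt | hJt
      · rw [hJt, ENNReal.mul_top (ENNReal.ofReal_pos.mpr (by positivity)).ne']
        exact le_top
      · have hvol_fin : volume {x | x ∈ B ∧ V (x, t) < km (m+1)} ≠ ⊤ :=
          ((measure_mono (fun x hx => hx.1)).trans_lt measure_ball_lt_top).ne
        have hInt : ∫ x in {x | x ∈ B ∧ km (m + 1) ≤ V (x, t) ∧ V (x, t) < km m},
            g (x, t) = J.toReal := by
          rw [hJ, integral_eq_lintegral_of_nonneg_ae
            (Filter.Eventually.of_forall fun x => hgnn _)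
            ((hg.comp measurable_prodMk_right).aestronglyMeasurable)]
        have hdg := hDG t ht m
        rw [hInt] at hdg
        have hsub : (k * (1 / 2) ^ m - k * (1 / 2) ^ (m+1) : ℝ) = km (m+1) := by
          simp only [hkmdef]; ring
        rw [hsub] at hdg
        calc ENNReal.ofReal (km (m+1)) * volume {x | x ∈ B ∧ V (x, t) < km (m+1)}
            = ENNReal.ofReal (km (m+1) *
                (volume {x | x ∈ B ∧ V (x, t) < km (m+1)}).toReal) := by
              rw [ENNReal.ofReal_mul (le_of_lt (hkm _)), ENNReal.ofReal_toReal hvol_fin]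
          _ ≤ ENNReal.ofReal (Cn * R / δ₁ * J.toReal) := ENNReal.ofReal_le_ofReal hdg
          _ = ENNReal.ofReal (Cn * R / δ₁) * J := by
              rw [ENNReal.ofReal_mul (by positivity), ENNReal.ofReal_toReal hJt]
    · rw [sliceS_empty (m+1) t ht]
      simp
  -- constants and real-valued measures
  set K : ℝ := 4 * C₁₄ * Cn ^ 2 * R ^ (n + 2) / δ₁ ^ 2 with hKdef
  have hK : 0 < K := by positivity
  have hSfin : ∀ m, volume (S m) ≠ ⊤ := fun m =>
    ((measure_mono Set.inter_subset_left).trans_lt (lt_top_iff_ne_top.mpr hQfin)).ne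
  have hEfin : ∀ m, volume (Em m) ≠ ⊤ := fun m =>
    ((measure_mono Set.inter_subset_left).trans_lt (lt_top_iff_ne_top.mpr hQfin)).ne
  set a : ℕ → ℝ := fun m => (volume (S m)).toReal with hadef
  set e : ℕ → ℝ := fun m => (volume (Em m)).toReal with hedef
  have hanneg : ∀ m, 0 ≤ a m := fun m => ENNReal.toReal_nonneg
  have henneg : ∀ m, 0 ≤ e m := fun m => ENNReal.toReal_nonneg
  -- Cauchy–Schwarz plus energy bound
  have CS : ∀ m, (∫⁻ p in Em m, ENNReal.ofReal (g p)) ≤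
      (volume (Em m)) ^ ((1:ℝ)/2) *
        (ENNReal.ofReal (C₁₄ * (k * (1 / 2) ^ m) ^ 2 * R ^ (n : ℝ))) ^ ((1:ℝ)/2) := by
    intro m
    have h2 : (2:ℝ).HolderConjugate 2 := Real.holderConjugate_iff.mpr ⟨by norm_num, by norm_num⟩
    have hCS := ENNReal.lintegral_mul_le_Lp_mul_Lq (volume.restrict (Em m)) h2
      (hg.ennreal_ofReal.aemeasurable) (aemeasurable_const (b := (1 : ENNReal)))
    simp only [Pi.mul_apply, mul_one, ENNReal.one_rpow, lintegral_one,
      Measure.restrict_apply MeasurableSet.univ, Set.univ_inter] at hCS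
    have hfs : ∀ p, (ENNReal.ofReal (g p)) ^ (2:ℝ) = ENNReal.ofReal ((g p) ^ 2) := by
      intro p
      rw [ENNReal.ofReal_rpow_of_nonneg (hgnn p) (by norm_num)]
      congr 1
      rw [show (2:ℝ) = ((2:ℕ):ℝ) by norm_num, Real.rpow_natCast]
    simp only [hfs] at hCS
    refine hCS.trans ?_
    rw [mul_comm (volume (Em m) ^ ((1:ℝ)/2))]
    have hE : (∫⁻ p in Em m, ENNReal.ofReal ((g p) ^ 2)) ≤
        ENNReal.ofReal (C₁₄ * (k * (1 / 2) ^ m) ^ 2 * R ^ (n : ℝ)) := by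
      refine le_trans (lintegral_mono_set ?_) (henergy m)
      exact Set.inter_subset_inter_right _ fun p hp => hp.2
    exact mul_le_mul_left (ENNReal.rpow_le_rpow hE (by norm_num : (0:ℝ) ≤ 1/2)) _
  -- main recursive inequality, in real numbers
  have key3 : ∀ m, (a (m+1)) ^ 2 ≤ K * e m := by
    intro m
    set Z : ℝ := C₁₄ * (k * (1 / 2) ^ m) ^ 2 * R ^ (n : ℝ) with hZdef
    have hZ : 0 < Z := by positivity
    have key2 : ENNReal.ofReal (km (m+1)) * volume (S (m+1)) ≤
        ENNReal.ofReal (Cn * R / δ₁) *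
          ((volume (Em m)) ^ ((1:ℝ)/2) * (ENNReal.ofReal Z) ^ ((1:ℝ)/2)) :=
      (key1 m).trans (mul_le_mul_right (CS m) _)
    have hfin : ENNReal.ofReal (Cn * R / δ₁) *
        ((volume (Em m)) ^ ((1:ℝ)/2) * (ENNReal.ofReal Z) ^ ((1:ℝ)/2)) ≠ ⊤ :=
      ENNReal.mul_ne_top ENNReal.ofReal_ne_top
        (ENNReal.mul_ne_top (ENNReal.rpow_ne_top_of_nonneg (by norm_num) (hEfin m))
          (ENNReal.rpow_ne_top_of_nonneg (by norm_num) ENNReal.ofReal_ne_top))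
    have h4 := ENNReal.toReal_mono hfin key2
    rw [ENNReal.toReal_mul, ENNReal.toReal_mul, ENNReal.toReal_mul,
      ENNReal.toReal_ofReal (le_of_lt (hkm (m+1))),
      ENNReal.toReal_ofReal (by positivity : (0:ℝ) ≤ Cn * R / δ₁),
      ← ENNReal.toReal_rpow, ← ENNReal.toReal_rpow,
      ENNReal.toReal_ofReal hZ.le] at h4
    -- h4 : km (m+1) * a (m+1) ≤ Cn*R/δ₁ * (e m ^ (1/2) * Z ^ (1/2))
    have hsq : ∀ x : ℝ, 0 ≤ x → (x ^ ((1:ℝ)/2)) ^ 2 = x := by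
      intro x hx
      rw [← Real.rpow_natCast (x ^ ((1:ℝ)/2)) 2, ← Real.rpow_mul hx]
      norm_num
    have h6 : (km (m+1)) ^ 2 * (a (m+1)) ^ 2 ≤ (Cn * R / δ₁) ^ 2 * (e m * Z) :=
      calc (km (m+1)) ^ 2 * (a (m+1)) ^ 2 = (km (m+1) * a (m+1)) ^ 2 := by ring
        _ ≤ (Cn * R / δ₁ * (e m ^ ((1:ℝ)/2) * Z ^ ((1:ℝ)/2))) ^ 2 := by
            apply pow_le_pow_left₀ (by positivity) h4
        _ = (Cn * R / δ₁) ^ 2 * ((e m ^ ((1:ℝ)/2)) ^ 2 * (Z ^ ((1:ℝ)/2)) ^ 2) := by ring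
        _ = (Cn * R / δ₁) ^ 2 * (e m * Z) := by rw [hsq _ (henneg m), hsq _ hZ.le]
    have hccc : (Cn * R / δ₁) ^ 2 * (e m * Z) = (K * e m) * (km (m+1)) ^ 2 := by
      rw [hZdef, hKdef, Real.rpow_natCast]
      have : (k * (1 / 2) ^ m) = 2 * km (m+1) := hkm_succ m
      rw [this]
      simp only [hkmdef]
      field_simp
      ring
    refine le_of_mul_le_mul_right ?_ (pow_pos (hkm (m+1)) 2)
    calc (a (m+1)) ^ 2 * (km (m+1)) ^ 2 = (km (m+1)) ^ 2 * (a (m+1)) ^ 2 := by ring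
      _ ≤ (Cn * R / δ₁) ^ 2 * (e m * Z) := h6
      _ = (K * e m) * (km (m+1)) ^ 2 := hccc
  -- antitonicity of levels and of a
  have hkmanti : ∀ i j : ℕ, i ≤ j → km j ≤ km i := by
    intro i j hij
    simp only [hkmdef]
    exact mul_le_mul_of_nonneg_left
      (pow_le_pow_of_le_one (by norm_num) (by norm_num) hij) hk.le
  have hamono : ∀ i j : ℕ, i ≤ j → a j ≤ a i := by
    intro i j hij
    refine ENNReal.toReal_mono (hSfin i) (measure_mono ?_)
    exact Set.inter_subset_inter_right _ fun p hp => lt_of_lt_of_le hp (hkmanti i j hij)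
  -- disjointness of the Em
  have hdisj : ∀ i j : ℕ, i < j → Disjoint (Em i) (Em j) := by
    intro i j hij
    rw [Set.disjoint_left]
    rintro p ⟨-, hi1, -⟩ ⟨-, -, hj2⟩
    exact absurd (lt_of_lt_of_le hj2 (hkmanti (i+1) j hij)) (not_lt.mpr hi1)
  -- sum of the e m
  have hsumR : ∀ s : ℕ, ∑ m ∈ Finset.range s, e m ≤ (volume Q).toReal := by
    intro s
    have hsum : ∑ m ∈ Finset.range s, volume (Em m) ≤ volume Q := by
      rw [← measure_biUnion_finset ?hd fun m _ => mE m]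
      · exact measure_mono (Set.iUnion₂_subset fun m _ => Set.inter_subset_left)
      case hd =>
        intro i hi j hj hij
        rcases lt_or_gt_of_ne hij with h | h
        · exact hdisj i j h
        · exact (hdisj j i h).symm
    have := ENNReal.toReal_mono hQfin hsum
    rwa [ENNReal.toReal_sum (fun m _ => hEfin m)] at this
  -- choice of s
  set q : ℝ := (volume Q).toReal with hqdef
  have hq : 0 < q := ENNReal.toReal_pos hQpos.ne' hQfin
  set s : ℕ := ⌈K / (μ ^ 2 * q)⌉₊ + 1 with hsdef
  have hs1 : 1 ≤ s := Nat.le_add_left 1 _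
  have hs1R : (1:ℝ) ≤ (s:ℝ) := by exact_mod_cast hs1
  have hsK : K / (μ ^ 2 * q) < (s:ℝ) := by
    calc K / (μ ^ 2 * q) ≤ (⌈K / (μ ^ 2 * q)⌉₊ : ℝ) := Nat.le_ceil _
      _ < (s:ℝ) := by rw [hsdef]; push_cast; linarith
  have hsK' : K < (s:ℝ) * (μ ^ 2 * q) := (div_lt_iff₀ (by positivity)).mp hsK
  -- main summation estimate
  have hs2 : (s:ℝ) * (a s) ^ 2 ≤ K * q :=
    calc (s:ℝ) * (a s) ^ 2 = ∑ _m ∈ Finset.range s, (a s) ^ 2 := by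
          rw [Finset.sum_const, Finset.card_range, nsmul_eq_mul]
      _ ≤ ∑ m ∈ Finset.range s, K * e m := by
          refine Finset.sum_le_sum fun m hm => ?_
          refine le_trans ?_ (key3 m)
          have := hamono (m+1) s (Finset.mem_range.mp hm)
          exact pow_le_pow_left₀ (hanneg s) this 2
      _ = K * ∑ m ∈ Finset.range s, e m := by rw [Finset.mul_sum]
      _ ≤ K * q := mul_le_mul_of_nonneg_left (hsumR s) hK.le
  -- conclude a s ≤ μ * q
  have h7 : (a s) ^ 2 ≤ (μ * q) ^ 2 := by nlinarith [mul_lt_mul_of_pos_right hsK' hq]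
  have haμ : a s ≤ μ * q := by
    have := Real.sqrt_le_sqrt h7
    rwa [Real.sqrt_sq (hanneg s), Real.sqrt_sq (by positivity)] at this
  -- final conclusion
  refine ⟨s, hs1, ?_⟩
  have hcomm : (1/2:ℝ) ^ s * k = k * (1/2) ^ s := mul_comm _ _
  rw [hcomm]
  calc volume (S s) = ENNReal.ofReal (a s) := (ENNReal.ofReal_toReal (hSfin s)).symm
    _ ≤ ENNReal.ofReal (μ * q) := ENNReal.ofReal_le_ofReal haμ
    _ = ENNReal.ofReal μ * ENNReal.ofReal q := ENNReal.ofReal_mul hμ0.le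
    _ = ENNReal.ofReal μ * volume Q := by rw [hqdef, ENNReal.ofReal_toReal hQfin]
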